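/- Let F = 𝔽_{2^m}, let S ⊆ F with 0 ∉ S, 1 ∈ S, |S| = s, and S generating the additive group of F, and let c, d ∈ F with c + d ∈ S, c ≠ 0, c ≠ 1. Suppose Γ = Cay(F, S) has PEST from the edge (0,1) to the edge (c,d) at some time t > 0, and suppose there exists z₀ ∈ S with z₀ ≠ 1 and 1 + z₀ ∉ S. Fix x₀ ∈ F with Tr(c x₀) = 0 and Tr(x₀) = 1, and let M = gcd{λ_{x₀} − λ_x : x ∈ T₁, x ≠ x₀}. Then M is a power of 2, say M = 2^ℓ, and ℓ ≤ ⌊log₂(2s(s+3))/2⌋. -/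

import Mathlib

open Matrix Finset

noncomputable section

noncomputable instance (m : ℕ) : Fintype (GaloisField 2 m) := Fintype.ofFinite _
noncomputable instance (m : ℕ) : DecidableEq (GaloisField 2 m) := Classical.decEq _

/-- The absolute trace map `Tr : 𝔽_{2^m} → 𝔽₂`. -/
def Ftr {m : ℕ} (x : GaloisField 2 m) : ZMod 2 :=
  Algebra.trace (ZMod 2) (GaloisField 2 m) x

/-- The adjacency matrix of the Cayley (cubelike) graph `Cay(G, S)`. -/
def adjMatrix {G : Type*} [AddCommGroup G] [Fintype G] [DecidableEq G]
    (S : Finset G) : Matrix G G ℂ :=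
  fun u v => if u + v ∈ S then 1 else 0

/-- The transfer matrix `H(t) = exp(i t A)`. -/
def transferMatrix {G : Type*} [AddCommGroup G] [Fintype G] [DecidableEq G]
    (S : Finset G) (t : ℝ) : Matrix G G ℂ :=
  NormedSpace.exp (Complex.I • ((t : ℂ) • adjMatrix S))

/-- The standard basis vector `e_a` of `ℂ^V`. -/
def stdBasis {G : Type*} [DecidableEq G] (a : G) : G → ℂ :=
  fun v => if v = a then 1 else 0

/-- Perfect edge state transfer from the edge `(a,b)` to the edge `(c,d)` at time `t`:
`|(1/2)(e_c - e_d)ᵀ H(t)(e_a - e_b)|² = 1`. -/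
def hasPEST {G : Type*} [AddCommGroup G] [Fintype G] [DecidableEq G]
    (S : Finset G) (a b c d : G) (t : ℝ) : Prop :=
  ‖(1 / 2 : ℂ) * dotProduct (stdBasis c - stdBasis d)
      (transferMatrix S t *ᵥ (stdBasis a - stdBasis b))‖ ^ 2 = 1

/-- The eigenvalue `λ_x = ∑_{s ∈ S} (-1)^{Tr(xs)}` of a cubelike graph on `𝔽_{2^m}`. -/
def lamF {m : ℕ} (S : Finset (GaloisField 2 m)) (x : GaloisField 2 m) : ℤ :=
  ∑ s ∈ S, (-1) ^ (Ftr (x * s)).val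

namespace PESTaux

local notation "F" => GaloisField 2

variable {m : ℕ}

/-- sign character -/
def sg {m : ℕ} (x : F m) : ℤ := (-1) ^ (Ftr x).val

lemma Ftr_add (x y : F m) : Ftr (x + y) = Ftr x + Ftr y :=
  map_add (Algebra.trace (ZMod 2) (F m)) x y

lemma sg_add (x y : F m) : sg (x + y) = sg x * sg y := by
  unfold sg
  rw [Ftr_add]
  have : ∀ a b : ZMod 2, ((-1 : ℤ)) ^ (a + b).val = (-1) ^ a.val * (-1) ^ b.val := by decide
  exact this _ _

lemma sg_zero : sg (0 : F m) = 1 := by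
  unfold sg Ftr
  rw [map_zero]
  rfl

lemma sg_cases (x : F m) : sg x = 1 ∨ sg x = -1 := by
  unfold sg
  have : ∀ a : ZMod 2, ((-1 : ℤ)) ^ a.val = 1 ∨ ((-1 : ℤ)) ^ a.val = -1 := by decide
  exact this _

lemma sg_eq_ite (x : F m) : sg x = if Ftr x = 1 then -1 else 1 := by
  unfold sg
  have : ∀ a : ZMod 2, ((-1 : ℤ)) ^ a.val = if a = 1 then -1 else 1 := by decide
  exact this _

lemma sg_mul_self (x : F m) : sg x * sg x = 1 := by
  rcases sg_cases x with h | h <;> rw [h] <;> ring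

lemma add_self (x : F m) : x + x = 0 := CharTwo.add_self_eq_zero x

lemma add_eq_zero_iff {x y : F m} : x + y = 0 ↔ x = y := by
  constructor
  · intro h
    have := congrArg (· + y) h
    simpa [add_assoc, add_self] using this
  · rintro rfl; exact add_self x

lemma exists_trace_one {u : F m} (hu : u ≠ 0) : ∃ w : F m, Ftr (w * u) = 1 := by
  have h := traceForm_nondegenerate (ZMod 2) (F m)
  by_contra hc
  push_neg at hc
  apply hu
  apply h.1 u
  intro w
  have h1 := hc w
  have h2 : Algebra.traceForm (ZMod 2) (F m) u w = Ftr (w * u) := by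
    simp [Algebra.traceForm_apply, Ftr, mul_comm]
  rw [h2]
  have : ∀ a : ZMod 2, a ≠ 1 → a = 0 := by decide
  exact this _ h1

/-- fundamental balanced character sum -/
lemma charSum {u : F m} (hu : u ≠ 0) : ∑ x : F m, sg (x * u) = 0 := by
  obtain ⟨w, hw⟩ := exists_trace_one hu
  have hsgw : sg (w * u) = -1 := by rw [sg_eq_ite, if_pos hw]
  have key : ∑ x : F m, sg ((x + w) * u) = ∑ x : F m, sg (x * u) :=
    Fintype.sum_equiv (Equiv.addRight w) _ _ (fun x => rfl)
  have key2 : ∀ x : F m, sg ((x + w) * u) = -sg (x * u) := by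
    intro x
    rw [add_mul, sg_add, hsgw]
    ring
  rw [Finset.sum_congr rfl (fun x _ => key2 x), Finset.sum_neg_distrib] at key
  linarith [key]

lemma card_F (hm : m ≠ 0) : (Fintype.card (F m) : ℤ) = 2 ^ m := by
  have := GaloisField.card 2 m hm
  rw [Nat.card_eq_fintype_card] at this
  exact_mod_cast this

lemma sumSg (hm : m ≠ 0) (u : F m) :
    ∑ x : F m, sg (x * u) = if u = 0 then (2 ^ m : ℤ) else 0 := by
  by_cases h : u = 0
  · subst h
    simp only [mul_zero, sg_zero, Finset.sum_const, Finset.card_univ, nsmul_eq_mul, mul_one,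
      if_pos]
    exact card_F hm
  · rw [if_neg h]; exact charSum h

def T1 (m : ℕ) : Finset (F m) := univ.filter (fun x => Ftr x = 1)

def XX (m : ℕ) (c : F m) : Finset (F m) :=
  univ.filter (fun x => Ftr x = 1 ∧ Ftr (c * x) = 1)

lemma sum_T1 (f : F m → ℤ) : ∑ x ∈ T1 m, f x * 2 = ∑ x : F m, f x * (1 - sg x) := by
  rw [T1, Finset.sum_filter]
  refine Finset.sum_congr rfl (fun x _ => ?_)
  rw [sg_eq_ite]
  by_cases h : Ftr x = 1 <;> simp [h]

lemma sum_XX (c : F m) (f : F m → ℤ) :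
    ∑ x ∈ XX m c, f x * 4 = ∑ x : F m, f x * ((1 - sg x) * (1 - sg (c * x))) := by
  rw [XX, Finset.sum_filter]
  refine Finset.sum_congr rfl (fun x _ => ?_)
  by_cases h1 : Ftr x = 1 <;> by_cases h2 : Ftr (c * x) = 1 <;>
    rw [sg_eq_ite x, sg_eq_ite (c * x)] <;> simp [h1, h2] <;> ring

lemma sumT1_sg (hm : m ≠ 0) (u : F m) :
    (∑ x ∈ T1 m, sg (x * u)) * 2
      = (if u = 0 then (2 ^ m : ℤ) else 0) - (if u = 1 then (2 ^ m : ℤ) else 0) := by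
  rw [Finset.sum_mul, sum_T1 (fun x => sg (x * u))]
  have point : ∀ x : F m, sg (x * u) * (1 - sg x) = sg (x * u) - sg (x * (u + 1)) := by
    intro x
    rw [mul_add, sg_add, mul_one]
    ring
  rw [Finset.sum_congr rfl (fun x _ => point x), Finset.sum_sub_distrib, sumSg hm,
    sumSg hm]
  have e : u + 1 = 0 ↔ u = 1 := add_eq_zero_iff
  rw [if_congr e rfl rfl]

lemma sumXX_sg (hm : m ≠ 0) (c : F m) (u : F m) :
    (∑ x ∈ XX m c, sg (x * u)) * 4
      = (if u = 0 then (2 ^ m : ℤ) else 0) - (if u = 1 then (2 ^ m : ℤ) else 0)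
        - (if u = c then (2 ^ m : ℤ) else 0) + (if u = c + 1 then (2 ^ m : ℤ) else 0) := by
  rw [Finset.sum_mul, sum_XX c (fun x => sg (x * u))]
  have point : ∀ x : F m, sg (x * u) * ((1 - sg x) * (1 - sg (c * x)))
      = sg (x * u) - sg (x * (u + 1)) - sg (x * (u + c)) + sg (x * (u + (c + 1))) := by
    intro x
    have h1 : sg (x * (u + 1)) = sg (x * u) * sg x := by rw [mul_add, sg_add, mul_one]
    have h2 : sg (x * (u + c)) = sg (x * u) * sg (c * x) := by
      rw [mul_add, sg_add, mul_comm x c]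
    have h3 : sg (x * (u + (c + 1))) = sg (x * u) * sg (c * x) * sg x := by
      rw [mul_add, sg_add, mul_add, sg_add, mul_one, mul_comm x c]
      ring
    rw [h1, h2, h3]
    ring
  rw [Finset.sum_congr rfl (fun x _ => point x)]
  rw [Finset.sum_add_distrib, Finset.sum_sub_distrib, Finset.sum_sub_distrib,
    sumSg hm, sumSg hm, sumSg hm, sumSg hm]
  have e1 : u + 1 = 0 ↔ u = 1 := add_eq_zero_iff
  have e2 : u + c = 0 ↔ u = c := add_eq_zero_iff
  have e3 : u + (c + 1) = 0 ↔ u = c + 1 := add_eq_zero_iff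
  rw [if_congr e1 rfl rfl, if_congr e2 rfl rfl, if_congr e3 rfl rfl]

lemma card_T1 (hm : m ≠ 0) : ((T1 m).card : ℤ) * 2 = 2 ^ m := by
  have h := sumT1_sg hm (0 : F m)
  have h2 : ∀ x : F m, sg (x * 0) = 1 := by intro x; rw [mul_zero, sg_zero]
  rw [Finset.sum_congr rfl (fun x _ => h2 x), Finset.sum_const, nsmul_eq_mul, mul_one] at h
  rw [if_pos rfl, if_neg (zero_ne_one (α := F m))] at h
  simpa using h

lemma card_XX (hm : m ≠ 0) {c : F m} (hc0 : c ≠ 0) (hc1 : c ≠ 1) :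
    ((XX m c).card : ℤ) * 4 = 2 ^ m := by
  have h := sumXX_sg hm c (0 : F m)
  have h2 : ∀ x : F m, sg (x * 0) = 1 := by intro x; rw [mul_zero, sg_zero]
  rw [Finset.sum_congr rfl (fun x _ => h2 x), Finset.sum_const, nsmul_eq_mul, mul_one] at h
  have e3 : (0 : F m) = c + 1 ↔ c = 1 := by
    constructor
    · intro hh
      have : c + 1 = 0 := hh.symm
      rw [add_eq_zero_iff] at this
      exact this
    · intro hh; rw [hh, add_self]
  rw [if_pos rfl, if_neg (zero_ne_one (α := F m)), if_neg (Ne.symm hc0),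
    if_neg (fun hh => hc1 (e3.mp hh))] at h
  simpa using h

lemma XX_nonempty (hm : m ≠ 0) {c : F m} (hc0 : c ≠ 0) (hc1 : c ≠ 1) :
    (XX m c).Nonempty := by
  rw [Finset.nonempty_iff_ne_empty]
  intro h
  have := card_XX hm hc0 hc1
  rw [h] at this
  simp at this
  exact pow_ne_zero m two_ne_zero this.symm

lemma lamF_eq (S : Finset (F m)) (x : F m) : lamF S x = ∑ a ∈ S, sg (x * a) := rfl

lemma lam_abs (S : Finset (F m)) (x : F m) : |lamF S x| ≤ (S.card : ℤ) := by
  rw [lamF_eq]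
  calc |∑ a ∈ S, sg (x * a)| ≤ ∑ a ∈ S, |sg (x * a)| := Finset.abs_sum_le_sum_abs _ _
    _ ≤ ∑ a ∈ S, 1 := by
        refine Finset.sum_le_sum (fun a _ => ?_)
        rcases sg_cases (x * a) with h | h <;> rw [h] <;> norm_num
    _ = S.card := by simp

lemma lamT1_z (hm : m ≠ 0) (S : Finset (F m)) {z₀ : F m} (hz00 : z₀ ≠ 0) (hz01 : z₀ ≠ 1)
    (hz0S : z₀ ∈ S) (hz0S' : 1 + z₀ ∉ S) :
    (∑ x ∈ T1 m, lamF S x * sg (x * z₀)) * 2 = 2 ^ m := by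
  have swap : (∑ x ∈ T1 m, lamF S x * sg (x * z₀)) * 2
      = ∑ a ∈ S, (∑ x ∈ T1 m, sg (x * (a + z₀))) * 2 := by
    have p : ∀ x : F m, lamF S x * sg (x * z₀) = ∑ a ∈ S, sg (x * (a + z₀)) := by
      intro x
      rw [lamF_eq, Finset.sum_mul]
      exact Finset.sum_congr rfl (fun a _ => by rw [← sg_add, ← mul_add])
    rw [Finset.sum_congr rfl (fun x _ => p x), Finset.sum_comm, Finset.sum_mul]
  rw [swap, Finset.sum_congr rfl (fun a _ => sumT1_sg hm (a + z₀))]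
  have e1 : ∀ a : F m, (a + z₀ = 0) ↔ (a = z₀) := fun a => add_eq_zero_iff
  have e2 : ∀ a : F m, (a + z₀ = 1) ↔ (a = 1 + z₀) := by
    intro a
    constructor
    · intro h
      have : a + z₀ + z₀ = 1 + z₀ := by rw [h]
      rwa [add_assoc, add_self, add_zero] at this
    · intro h; rw [h, add_assoc, add_self, add_zero]
  rw [Finset.sum_congr rfl (fun a _ => by
    rw [if_congr (e1 a) rfl rfl, if_congr (e2 a) rfl rfl])]
  rw [Finset.sum_sub_distrib, Finset.sum_ite_eq' S z₀ (fun _ => (2:ℤ)^m),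
    Finset.sum_ite_eq' S (1 + z₀) (fun _ => (2:ℤ)^m), if_pos hz0S, if_neg hz0S']
  ring

lemma lamsq_XX (hm : m ≠ 0) {c : F m} (S : Finset (F m)) :
    (∑ x ∈ XX m c, (lamF S x) ^ 2) * 4 ≤ 2 ^ m * (2 * S.card) := by
  have expand : ∀ x : F m, (lamF S x) ^ 2 = ∑ a ∈ S, ∑ b ∈ S, sg (x * (a + b)) := by
    intro x
    rw [lamF_eq, sq, Finset.sum_mul_sum]
    exact Finset.sum_congr rfl (fun a _ => Finset.sum_congr rfl (fun b _ => by
      rw [← sg_add, ← mul_add]))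
  have swap : (∑ x ∈ XX m c, (lamF S x) ^ 2) * 4
      = ∑ a ∈ S, ∑ b ∈ S, (∑ x ∈ XX m c, sg (x * (a + b))) * 4 := by
    rw [Finset.sum_mul, Finset.sum_congr rfl (fun x _ => by rw [expand x])]
    rw [← Finset.sum_mul]
    rw [Finset.sum_comm]
    rw [Finset.sum_mul]
    refine Finset.sum_congr rfl (fun a _ => ?_)
    rw [← Finset.sum_mul, Finset.sum_comm, Finset.sum_mul]
  rw [swap]
  have rowbound : ∀ a ∈ S, ∑ b ∈ S, (∑ x ∈ XX m c, sg (x * (a + b))) * 4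
      ≤ 2 ^ m + 2 ^ m := by
    intro a ha
    rw [Finset.sum_congr rfl (fun b _ => sumXX_sg hm c (a + b))]
    have e0 : ∀ b : F m, (a + b = 0) ↔ (b = a) := by
      intro b
      rw [← add_eq_zero_iff (x := b) (y := a)]
      constructor <;> intro h <;> [rwa [add_comm] at h; rwa [add_comm] at h]
    have e3 : ∀ b : F m, (a + b = c + 1) ↔ (b = a + (c + 1)) := by
      intro b
      constructor
      · intro h
        have : a + (a + b) = a + (c + 1) := by rw [h]
        rwa [← add_assoc, add_self, zero_add] at this
      · intro h; rw [h, ← add_assoc, add_self, zero_add]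
    calc ∑ b ∈ S, ((if a + b = 0 then (2:ℤ)^m else 0) - (if a + b = 1 then (2:ℤ)^m else 0)
          - (if a + b = c then (2:ℤ)^m else 0) + (if a + b = c + 1 then (2:ℤ)^m else 0))
        ≤ ∑ b ∈ S, ((if b = a then (2:ℤ)^m else 0) + (if b = a + (c+1) then (2:ℤ)^m else 0)) := by
          refine Finset.sum_le_sum (fun b _ => ?_)
          rw [if_congr (e0 b) rfl rfl, if_congr (e3 b) rfl rfl]
          have p1 : (0:ℤ) ≤ (if a + b = 1 then (2:ℤ)^m else 0) := by
            split
            · positivity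
            · exact le_refl 0
          have p2 : (0:ℤ) ≤ (if a + b = c then (2:ℤ)^m else 0) := by
            split
            · positivity
            · exact le_refl 0
          linarith
      _ = (if a ∈ S then (2:ℤ)^m else 0) + (if a + (c+1) ∈ S then (2:ℤ)^m else 0) := by
          rw [Finset.sum_add_distrib, Finset.sum_ite_eq' S a (fun _ => (2:ℤ)^m),
            Finset.sum_ite_eq' S (a + (c+1)) (fun _ => (2:ℤ)^m)]
      _ ≤ 2 ^ m + 2 ^ m := by
          have two_pos : (0:ℤ) ≤ (2:ℤ)^m := pow_nonneg (by norm_num) m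
          have p1 : (if a ∈ S then (2:ℤ)^m else 0) ≤ (2:ℤ)^m := by
            by_cases hq : a ∈ S
            · rw [if_pos hq]
            · rw [if_neg hq]; exact two_pos
          have p2 : (if a + (c+1) ∈ S then (2:ℤ)^m else 0) ≤ (2:ℤ)^m := by
            by_cases hq : a + (c+1) ∈ S
            · rw [if_pos hq]
            · rw [if_neg hq]; exact two_pos
          linarith
  calc ∑ a ∈ S, ∑ b ∈ S, (∑ x ∈ XX m c, sg (x * (a + b))) * 4
      ≤ ∑ a ∈ S, ((2:ℤ) ^ m + 2 ^ m) := Finset.sum_le_sum rowbound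
    _ = S.card * (2 ^ m + 2 ^ m) := by rw [Finset.sum_const, nsmul_eq_mul]
    _ = 2 ^ m * (2 * S.card) := by ring

/-- Equality in the triangle inequality: every term is aligned with the sum. -/
lemma align_of_abs_sum {ι : Type*} (s : Finset ι) (z : ι → ℂ)
    (h : ‖∑ i ∈ s, z i‖ = ∑ i ∈ s, ‖z i‖) :
    ∀ i ∈ s, ((‖∑ j ∈ s, z j‖ : ℝ) : ℂ) * z i
      = ((‖z i‖ : ℝ) : ℂ) * (∑ j ∈ s, z j) := by
  set T := ∑ j ∈ s, z j with hT
  have hterm : ∀ i ∈ s, ((starRingEnd ℂ) T * z i).re ≤ ‖T‖ * ‖z i‖ := by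
    intro i _
    calc ((starRingEnd ℂ) T * z i).re ≤ ‖(starRingEnd ℂ) T * z i‖ :=
          Complex.re_le_norm _
      _ = ‖T‖ * ‖z i‖ := by rw [norm_mul, Complex.norm_conj]
  have hsum : ∑ i ∈ s, ((starRingEnd ℂ) T * z i).re
      = ∑ i ∈ s, ‖T‖ * ‖z i‖ := by
    have e1 : ∑ i ∈ s, ((starRingEnd ℂ) T * z i).re = ((starRingEnd ℂ) T * T).re := by
      rw [hT, Finset.mul_sum, Complex.re_sum]
    have e2 : ((starRingEnd ℂ) T * T).re = ‖T‖ * ‖T‖ := by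
      rw [mul_comm, Complex.mul_conj, Complex.ofReal_re, ← Complex.sq_norm, sq]
    rw [e1, e2, ← Finset.mul_sum, ← h]
  have heach : ∀ i ∈ s, ((starRingEnd ℂ) T * z i).re = ‖T‖ * ‖z i‖ :=
    (Finset.sum_eq_sum_iff_of_le hterm).mp hsum
  intro i hi
  have hre := heach i hi
  have key : Complex.normSq (((‖T‖ : ℝ) : ℂ) * z i
      - ((‖z i‖ : ℝ) : ℂ) * T) = 0 := by
    rw [Complex.normSq_sub]
    have n1 : Complex.normSq (((‖T‖ : ℝ) : ℂ) * z i)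
        = ‖T‖ ^ 2 * ‖z i‖ ^ 2 := by
      rw [Complex.normSq_mul, Complex.normSq_ofReal, ← Complex.sq_norm]
      ring
    have n2 : Complex.normSq (((‖z i‖ : ℝ) : ℂ) * T)
        = ‖z i‖ ^ 2 * ‖T‖ ^ 2 := by
      rw [Complex.normSq_mul, Complex.normSq_ofReal, ← Complex.sq_norm]
      ring
    have n3 : ((((‖T‖ : ℝ) : ℂ) * z i)
        * (starRingEnd ℂ) (((‖z i‖ : ℝ) : ℂ) * T)).re
        = ‖T‖ ^ 2 * ‖z i‖ ^ 2 := by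
      rw [_root_.map_mul, Complex.conj_ofReal]
      have : (((‖T‖ : ℝ) : ℂ) * z i)
          * (((‖z i‖ : ℝ) : ℂ) * (starRingEnd ℂ) T)
          = ((‖T‖ : ℝ) : ℂ) * (((‖z i‖ : ℝ) : ℂ)
            * ((starRingEnd ℂ) T * z i)) := by ring
      rw [this, Complex.re_ofReal_mul, Complex.re_ofReal_mul, hre]
      ring
    rw [n1, n2, n3]
    ring
  have := Complex.normSq_eq_zero.mp key
  linear_combination this

lemma abs_lamc (t : ℝ) (n : ℤ) :
    ‖Complex.exp (Complex.I * ((t : ℂ) * (n : ℂ)))‖ = 1 := by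
  rw [Complex.norm_exp]
  have h : Complex.I * ((t : ℂ) * (n : ℂ)) = Complex.I * (((t * n : ℝ)) : ℂ) := by
    push_cast
    ring
  rw [h]
  have h2 : (Complex.I * (((t * n : ℝ)) : ℂ)).re = 0 := by
    simp [Complex.mul_re]
  rw [h2, Real.exp_zero]

lemma pest_neq (hm : m ≠ 0) {S : Finset (F m)} {c d x₀ : F m} {t : ℝ}
    (hPE : hasPEST S 0 1 c d t) (hx₀1 : Ftr x₀ = 1) (hx₀c : Ftr (c * x₀) = 0) :
    ∀ x : F m, Ftr x = 1 → Ftr (c * x) = 1 → lamF S x₀ ≠ lamF S x := by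
  classical
  set Q : Matrix (F m) (F m) ℂ := fun x y => ((sg (x * y) : ℤ) : ℂ) with hQdef
  have h2m : ((2 : ℂ) ^ m) ≠ 0 := pow_ne_zero _ two_ne_zero
  -- Q * Q = 2^m • 1
  have hQQ : Q * Q = ((2 : ℂ) ^ m) • (1 : Matrix (F m) (F m) ℂ) := by
    ext x y
    rw [Matrix.mul_apply]
    have p : ∀ v : F m, Q x v * Q v y = ((sg (v * (x + y)) : ℤ) : ℂ) := by
      intro v
      have e : sg (x * v) * sg (v * y) = sg (v * (x + y)) := by
        rw [mul_comm x v, ← sg_add, ← mul_add]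
      show ((sg (x * v) : ℤ) : ℂ) * ((sg (v * y) : ℤ) : ℂ) = _
      rw [← Int.cast_mul, e]
    rw [Finset.sum_congr rfl (fun v _ => p v), ← Int.cast_sum, sumSg hm (x + y)]
    have e2 : x + y = 0 ↔ x = y := add_eq_zero_iff
    rw [if_congr e2 rfl rfl, Matrix.smul_apply, Matrix.one_apply]
    by_cases hxy : x = y
    · rw [if_pos hxy, if_pos hxy, smul_eq_mul, mul_one]
      push_cast
      ring
    · rw [if_neg hxy, if_neg hxy, smul_eq_mul, mul_zero, Int.cast_zero]
  have hQQ' : Q * (((2 : ℂ) ^ m)⁻¹ • Q) = 1 := by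
    rw [Matrix.mul_smul, hQQ, smul_smul, inv_mul_cancel₀ h2m, one_smul]
  have hU : IsUnit Q := (Matrix.isUnit_iff_isUnit_det Q).mpr (Matrix.isUnit_det_of_right_inverse hQQ')
  have hQinv : Q⁻¹ = ((2 : ℂ) ^ m)⁻¹ • Q := Matrix.inv_eq_right_inv hQQ'
  -- diagonalization of the adjacency matrix
  have hAQ : adjMatrix S * Q
      = Q * Matrix.diagonal (fun x => ((lamF S x : ℤ) : ℂ)) := by
    ext u x
    rw [Matrix.mul_apply, Matrix.mul_diagonal]
    have p : ∀ v : F m, adjMatrix S u v * Q v x = if u + v ∈ S then Q v x else 0 := by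
      intro v
      show (if u + v ∈ S then (1 : ℂ) else 0) * Q v x = _
      exact boole_mul _ _
    rw [Finset.sum_congr rfl (fun v _ => p v)]
    have step1 : ∑ v : F m, (if u + v ∈ S then Q v x else 0)
        = ∑ a : F m, (if a ∈ S then Q (u + a) x else 0) := by
      refine (Fintype.sum_equiv (Equiv.addLeft u)
        (fun a => if a ∈ S then Q (u + a) x else 0)
        (fun v => if u + v ∈ S then Q v x else 0) ?_).symm
      intro a
      have e1 : u + (u + a) = a := by rw [← add_assoc, add_self, zero_add]
      simp only [Equiv.coe_addLeft, e1]
    rw [step1, Finset.sum_ite_mem, Finset.univ_inter]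
    have p2 : ∀ a : F m, Q (u + a) x = ((sg (u * x) * sg (x * a) : ℤ) : ℂ) := by
      intro a
      show ((sg ((u + a) * x) : ℤ) : ℂ) = _
      rw [add_mul, sg_add, mul_comm a x]
    rw [Finset.sum_congr rfl (fun a _ => p2 a), ← Int.cast_sum, ← Finset.mul_sum,
      ← lamF_eq]
    show _ = ((sg (u * x) : ℤ) : ℂ) * _
    push_cast
    ring
  have hA : adjMatrix S = Q * Matrix.diagonal (fun x => ((lamF S x : ℤ) : ℂ)) * Q⁻¹ := by
    rw [hQinv]
    calc adjMatrix S = adjMatrix S * (Q * (((2 : ℂ) ^ m)⁻¹ • Q)) := by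
          rw [hQQ', Matrix.mul_one]
      _ = (adjMatrix S * Q) * (((2 : ℂ) ^ m)⁻¹ • Q) := by rw [Matrix.mul_assoc]
      _ = Q * Matrix.diagonal (fun x => ((lamF S x : ℤ) : ℂ)) * (((2 : ℂ) ^ m)⁻¹ • Q) := by
          rw [hAQ]
  have hB : Complex.I • ((t : ℂ) • adjMatrix S)
      = Q * Matrix.diagonal (fun x => Complex.I * ((t : ℂ) * ((lamF S x : ℤ) : ℂ))) * Q⁻¹ := by
    have e : ∀ (r : ℂ) (D' : Matrix (F m) (F m) ℂ),
        r • ((Q * D') * Q⁻¹) = (Q * (r • D')) * Q⁻¹ := by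
      intro r D'
      rw [← Matrix.smul_mul, ← Matrix.mul_smul]
    have e2 : Complex.I • ((t : ℂ) • Matrix.diagonal (fun x => ((lamF S x : ℤ) : ℂ)))
        = Matrix.diagonal (fun x => Complex.I * ((t : ℂ) * ((lamF S x : ℤ) : ℂ))) := by
      ext i j
      simp [Matrix.diagonal_apply, Matrix.smul_apply, smul_eq_mul, mul_ite, mul_zero]
    rw [hA, e, e, e2]
  -- the transfer matrix
  set lamc : F m → ℂ := fun x => Complex.exp (Complex.I * ((t : ℂ) * ((lamF S x : ℤ) : ℂ)))
    with hlamc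
  have hH : transferMatrix S t = Q * Matrix.diagonal lamc * Q⁻¹ := by
    rw [transferMatrix, hB, Matrix.exp_conj Q _ hU, Matrix.exp_diagonal]
    congr 2
    rw [Pi.exp_def]
    funext x
    rw [hlamc, ← Complex.exp_eq_exp_ℂ]
  -- computation of H *ᵥ (e₀ - e₁)
  have hQu : ∀ y : F m, (Q *ᵥ (stdBasis 0 - stdBasis 1)) y = 1 - ((sg y : ℤ) : ℂ) := by
    intro y
    show ∑ v : F m, Q y v * (stdBasis (0 : F m) v - stdBasis (1 : F m) v) = _
    have p : ∀ v : F m, Q y v * (stdBasis (0 : F m) v - stdBasis (1 : F m) v)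
        = (if v = 0 then Q y v else 0) - (if v = 1 then Q y v else 0) := by
      intro v
      show Q y v * ((if v = 0 then (1:ℂ) else 0) - (if v = 1 then (1:ℂ) else 0)) = _
      rw [mul_sub, mul_boole, mul_boole]
    rw [Finset.sum_congr rfl (fun v _ => p v), Finset.sum_sub_distrib,
      Finset.sum_ite_eq' Finset.univ (0 : F m) (fun v => Q y v),
      Finset.sum_ite_eq' Finset.univ (1 : F m) (fun v => Q y v),
      if_pos (Finset.mem_univ _), if_pos (Finset.mem_univ _)]
    show ((sg (y * 0) : ℤ) : ℂ) - ((sg (y * 1) : ℤ) : ℂ) = _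
    rw [mul_zero, mul_one, sg_zero]
    norm_num
  have hHu : ∀ y : F m, (transferMatrix S t *ᵥ (stdBasis 0 - stdBasis 1)) y
      = ((2 : ℂ) ^ m)⁻¹ * ∑ x : F m,
          ((sg (y * x) : ℤ) : ℂ) * (lamc x * (1 - ((sg x : ℤ) : ℂ))) := by
    intro y
    rw [hH, hQinv, ← Matrix.mulVec_mulVec, ← Matrix.mulVec_mulVec,
      Matrix.smul_mulVec]
    have inner : ∀ x : F m,
        (Matrix.diagonal lamc *ᵥ (((2 : ℂ) ^ m)⁻¹ • (Q *ᵥ (stdBasis 0 - stdBasis 1)))) x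
        = ((2 : ℂ) ^ m)⁻¹ * (lamc x * (1 - ((sg x : ℤ) : ℂ))) := by
      intro x
      rw [Matrix.mulVec_diagonal]
      rw [Pi.smul_apply, hQu x, smul_eq_mul]
      ring
    show ∑ x : F m, Q y x
        * (Matrix.diagonal lamc *ᵥ (((2 : ℂ) ^ m)⁻¹ • (Q *ᵥ (stdBasis 0 - stdBasis 1)))) x
        = _
    rw [Finset.sum_congr rfl (fun x _ => by rw [inner x]), Finset.mul_sum]
    refine Finset.sum_congr rfl (fun x _ => ?_)
    show ((sg (y * x) : ℤ) : ℂ) * _ = _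
    ring
  -- the amplitude as a character sum over T1
  set zf : F m → ℂ :=
    fun x => lamc x * (((sg (c * x) : ℤ) : ℂ) - ((sg (d * x) : ℤ) : ℂ)) with hzf
  have hdot : dotProduct (stdBasis c - stdBasis d) (transferMatrix S t *ᵥ (stdBasis 0 - stdBasis 1))
      = (transferMatrix S t *ᵥ (stdBasis 0 - stdBasis 1)) c
        - (transferMatrix S t *ᵥ (stdBasis 0 - stdBasis 1)) d := by
    set g := transferMatrix S t *ᵥ (stdBasis 0 - stdBasis 1) with hg
    show ∑ y : F m, (stdBasis c y - stdBasis d y) * g y = _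
    have p : ∀ y : F m, (stdBasis c y - stdBasis d y) * g y
        = (if y = c then g y else 0) - (if y = d then g y else 0) := by
      intro y
      show ((if y = c then (1:ℂ) else 0) - (if y = d then (1:ℂ) else 0)) * g y = _
      rw [sub_mul, boole_mul, boole_mul]
    rw [Finset.sum_congr rfl (fun y _ => p y), Finset.sum_sub_distrib,
      Finset.sum_ite_eq' Finset.univ c g, Finset.sum_ite_eq' Finset.univ d g,
      if_pos (Finset.mem_univ _), if_pos (Finset.mem_univ _)]
  have hamp : (1 / 2 : ℂ) * dotProduct (stdBasis c - stdBasis d)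
      (transferMatrix S t *ᵥ (stdBasis 0 - stdBasis 1))
      = ((2 : ℂ) ^ m)⁻¹ * ∑ x ∈ T1 m, zf x := by
    rw [hdot, hHu c, hHu d, ← mul_sub, ← Finset.sum_sub_distrib]
    have ptw : ∀ x : F m,
        (1 / 2 : ℂ) * (((sg (c * x) : ℤ) : ℂ) * (lamc x * (1 - ((sg x : ℤ) : ℂ)))
          - ((sg (d * x) : ℤ) : ℂ) * (lamc x * (1 - ((sg x : ℤ) : ℂ))))
        = if Ftr x = 1 then zf x else 0 := by
      intro x
      by_cases hx : Ftr x = 1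
      · rw [if_pos hx]
        have hsx : sg x = -1 := by rw [sg_eq_ite, if_pos hx]
        rw [hsx, hzf]
        push_cast
        ring
      · rw [if_neg hx]
        have hsx : sg x = 1 := by rw [sg_eq_ite, if_neg hx]
        rw [hsx]
        push_cast
        ring
    calc (1 / 2 : ℂ) * (((2 : ℂ) ^ m)⁻¹
          * ∑ x : F m, (((sg (c * x) : ℤ) : ℂ) * (lamc x * (1 - ((sg x : ℤ) : ℂ)))
            - ((sg (d * x) : ℤ) : ℂ) * (lamc x * (1 - ((sg x : ℤ) : ℂ)))))
        = ((2 : ℂ) ^ m)⁻¹ * ∑ x : F m,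
            (1 / 2 : ℂ) * (((sg (c * x) : ℤ) : ℂ) * (lamc x * (1 - ((sg x : ℤ) : ℂ)))
              - ((sg (d * x) : ℤ) : ℂ) * (lamc x * (1 - ((sg x : ℤ) : ℂ)))) := by
          rw [Finset.mul_sum, Finset.mul_sum, Finset.mul_sum]
          rw [← Finset.sum_congr rfl (fun x _ => rfl)]
          refine Finset.sum_congr rfl (fun x _ => ?_)
          ring
      _ = ((2 : ℂ) ^ m)⁻¹ * ∑ x : F m, (if Ftr x = 1 then zf x else 0) := by
          rw [Finset.sum_congr rfl (fun x _ => ptw x)]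
      _ = ((2 : ℂ) ^ m)⁻¹ * ∑ x ∈ T1 m, zf x := by rw [T1, Finset.sum_filter]
  -- |sum| = 2^m
  have habs : ‖∑ x ∈ T1 m, zf x‖ = 2 ^ m := by
    have h1 : ‖(1 / 2 : ℂ) * dotProduct (stdBasis c - stdBasis d)
        (transferMatrix S t *ᵥ (stdBasis 0 - stdBasis 1))‖ ^ 2 = 1 := hPE
    rw [hamp, norm_mul] at h1
    have h2 : ‖((2 : ℂ) ^ m)⁻¹‖ = ((2 : ℝ) ^ m)⁻¹ := by
      rw [norm_inv, norm_pow, Complex.norm_two]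
    rw [h2] at h1
    set A := ‖∑ x ∈ T1 m, zf x‖ with hA
    have hpos : (0 : ℝ) < (2 : ℝ) ^ m := by positivity
    have hA2 : A ^ 2 = ((2 : ℝ) ^ m) ^ 2 := by
      have e : (((2 : ℝ) ^ m)⁻¹ * A) ^ 2 * ((2 : ℝ) ^ m) ^ 2 = A ^ 2 := by
        field_simp
      rw [h1, one_mul] at e
      linarith [e]
    have hfac : (A - 2 ^ m) * (A + 2 ^ m) = 0 := by linear_combination hA2
    rcases mul_eq_zero.mp hfac with h | h
    · linarith
    · have := norm_nonneg (∑ x ∈ T1 m, zf x)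
      rw [← hA] at this
      linarith
  -- each |zf x| ≤ 2
  have hlamc_abs : ∀ x : F m, ‖lamc x‖ = 1 := by
    intro x
    rw [hlamc]
    exact abs_lamc t (lamF S x)
  have habs_le : ∀ x ∈ T1 m, ‖zf x‖ ≤ 2 := by
    intro x _
    rw [hzf]
    show ‖lamc x * _‖ ≤ 2
    rw [norm_mul, hlamc_abs x, one_mul]
    rcases sg_cases (c * x) with h | h <;> rcases sg_cases (d * x) with h' | h' <;>
      rw [h, h'] <;> norm_num
  -- the sum of absolute values equals the trivial bound
  have hcardT : ((T1 m).card : ℝ) * 2 = 2 ^ m := by exact_mod_cast card_T1 hm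
  have hsum2 : ∑ x ∈ T1 m, (2 : ℝ) = 2 ^ m := by
    rw [Finset.sum_const, nsmul_eq_mul, ← hcardT]
  have hsums : ∑ x ∈ T1 m, ‖zf x‖ = ∑ x ∈ T1 m, (2 : ℝ) := by
    have hge : 2 ^ m ≤ ∑ x ∈ T1 m, ‖zf x‖ := by
      rw [← habs]
      exact norm_sum_le _ _
    have hle : ∑ x ∈ T1 m, ‖zf x‖ ≤ ∑ x ∈ T1 m, (2 : ℝ) :=
      Finset.sum_le_sum habs_le
    linarith [hge, hle, hsum2]
  have heach : ∀ x ∈ T1 m, ‖zf x‖ = 2 :=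
    (Finset.sum_eq_sum_iff_of_le habs_le).mp hsums
  -- alignment
  have halign := align_of_abs_sum (T1 m) zf (by rw [habs, hsums, hsum2])
  have hkey : ∀ x ∈ T1 m, ∀ y ∈ T1 m, zf x = zf y := by
    intro x hx y hy
    have e1 := halign x hx
    have e2 := halign y hy
    rw [heach x hx] at e1
    rw [heach y hy] at e2
    rw [habs] at e1 e2
    have e3 : (((2 : ℝ) ^ m : ℝ) : ℂ) * zf x = (((2 : ℝ) ^ m : ℝ) : ℂ) * zf y := by
      rw [e1, e2]
    have hne : (((2 : ℝ) ^ m : ℝ) : ℂ) ≠ 0 := by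
      simp only [ne_eq, Complex.ofReal_eq_zero]
      positivity
    exact mul_left_cancel₀ hne e3
  -- opposite signs of c and d characters on T1
  have hsgdx : ∀ x ∈ T1 m, sg (d * x) = -sg (c * x) := by
    intro x hx
    have h2 := heach x hx
    have hz0 : ((sg (c * x) : ℤ) : ℂ) - ((sg (d * x) : ℤ) : ℂ) ≠ 0 := by
      intro h0
      have hzz : zf x = 0 := by
        show lamc x * (((sg (c * x) : ℤ) : ℂ) - ((sg (d * x) : ℤ) : ℂ)) = 0
        rw [h0, mul_zero]
      rw [hzz] at h2
      simp at h2
    rcases sg_cases (c * x) with h | h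
    · rcases sg_cases (d * x) with h' | h'
      · exfalso; apply hz0; rw [h, h']; norm_num
      · simp [h, h']
    · rcases sg_cases (d * x) with h' | h'
      · simp [h, h']
      · exfalso; apply hz0; rw [h, h']; norm_num
  -- conclusion
  intro x hx1 hxc hlameq
  have hxT : x ∈ T1 m := by
    rw [T1, Finset.mem_filter]
    exact ⟨Finset.mem_univ _, hx1⟩
  have hx0T : x₀ ∈ T1 m := by
    rw [T1, Finset.mem_filter]
    exact ⟨Finset.mem_univ _, hx₀1⟩
  have hzeq : zf x = zf x₀ := hkey x hxT x₀ hx0T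
  have hsgcx : sg (c * x) = -1 := by
    rw [sg_eq_ite, if_pos hxc]
  have hsgcx0 : sg (c * x₀) = 1 := by
    rw [sg_eq_ite, if_neg (by rw [hx₀c]; decide)]
  have hlc : lamc x = lamc x₀ := by
    show Complex.exp (Complex.I * ((t : ℂ) * ((lamF S x : ℤ) : ℂ)))
      = Complex.exp (Complex.I * ((t : ℂ) * ((lamF S x₀ : ℤ) : ℂ)))
    rw [hlameq]
  have hzx : zf x = -2 * lamc x := by
    show lamc x * (((sg (c * x) : ℤ) : ℂ) - ((sg (d * x) : ℤ) : ℂ)) = -2 * lamc x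
    rw [hsgdx x hxT, hsgcx]
    push_cast
    ring
  have hzx0 : zf x₀ = 2 * lamc x₀ := by
    show lamc x₀ * (((sg (c * x₀) : ℤ) : ℂ) - ((sg (d * x₀) : ℤ) : ℂ)) = 2 * lamc x₀
    rw [hsgdx x₀ hx0T, hsgcx0]
    push_cast
    ring
  rw [hzx, hzx0, hlc] at hzeq
  have : (4 : ℂ) * lamc x₀ = 0 := by linear_combination -hzeq
  have h4 : lamc x₀ = 0 := by
    have h5 : (4 : ℂ) ≠ 0 := by norm_num
    exact (mul_eq_zero.mp this).resolve_left h5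
  exact Complex.exp_ne_zero _ h4

end PESTaux

open PESTaux

/-- If `Cay(𝔽_{2^m}, S)` has PEST from `(0,1)` to `(c,d)` and there is `z₀ ∈ S`, `z₀ ≠ 1`,
with `1 + z₀ ∉ S`, then `M = gcd{λ_{x₀} - λ_x : x ∈ T₁, x ≠ x₀}` is a power of 2,
say `M = 2^ℓ`, with `ℓ ≤ ⌊log₂(2s(s+3))/2⌋`. -/
theorem gcd_eq_pow_two_of_hasPEST {m : ℕ} (hm : 1 ≤ m)
    (S : Finset (GaloisField 2 m)) (h0 : (0 : GaloisField 2 m) ∉ S)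
    (h1 : (1 : GaloisField 2 m) ∈ S) (s : ℕ) (hs : S.card = s)
    (hgen : AddSubgroup.closure (S : Set (GaloisField 2 m)) = ⊤)
    (c d : GaloisField 2 m) (hcd : c + d ∈ S) (hc0 : c ≠ 0) (hc1 : c ≠ 1)
    (hP : ∃ t : ℝ, 0 < t ∧ hasPEST S 0 1 c d t)
    (z₀ : GaloisField 2 m) (hz₀ : z₀ ∈ S) (hz₀1 : z₀ ≠ 1) (hz₀S : 1 + z₀ ∉ S)
    (x₀ : GaloisField 2 m) (hx₀ : Ftr (c * x₀) = 0 ∧ Ftr x₀ = 1)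
    (M : ℤ)
    (hM : M = (univ.filter (fun x : GaloisField 2 m => Ftr x = 1 ∧ x ≠ x₀)).gcd
      (fun x => lamF S x₀ - lamF S x)) :
    ∃ ℓ : ℕ, M = 2 ^ ℓ ∧ ℓ ≤ Nat.log 2 (2 * s * (s + 3)) / 2 := by
  classical
  have hm' : m ≠ 0 := Nat.one_le_iff_ne_zero.mp hm
  obtain ⟨t, ht, hPE⟩ := hP
  have hneq := pest_neq hm' hPE hx₀.2 hx₀.1
  have hspos : 1 ≤ s := by
    rw [← hs]
    exact Finset.card_pos.mpr ⟨1, h1⟩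
  -- find x₁ ∈ XX with small eigenvalue square
  have hXXne : (XX m c).Nonempty := XX_nonempty hm' hc0 hc1
  have hcardXX := card_XX hm' hc0 hc1
  have hsumXX := lamsq_XX hm' (c := c) S
  have hsum_le : ∑ x ∈ XX m c, (lamF S x) ^ 2 ≤ ∑ x ∈ XX m c, 2 * (S.card : ℤ) := by
    have e : ∑ x ∈ XX m c, 2 * (S.card : ℤ) = ((XX m c).card : ℤ) * (2 * S.card) := by
      rw [Finset.sum_const, nsmul_eq_mul]
    rw [e]
    nlinarith [hsumXX, hcardXX]
  obtain ⟨x₁, hx₁XX, hx₁sq⟩ := Finset.exists_le_of_sum_le hXXne hsum_le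
  have hx₁mem := Finset.mem_filter.mp hx₁XX
  have hx₁1 : Ftr x₁ = 1 := hx₁mem.2.1
  have hx₁c : Ftr (c * x₁) = 1 := hx₁mem.2.2
  have hne : lamF S x₀ ≠ lamF S x₁ := hneq x₁ hx₁1 hx₁c
  have hx₁x₀ : x₁ ≠ x₀ := by
    intro h
    rw [h, hx₀.1] at hx₁c
    exact (by decide : (0 : ZMod 2) ≠ 1) hx₁c
  have hx₁f : x₁ ∈ univ.filter (fun x : GaloisField 2 m => Ftr x = 1 ∧ x ≠ x₀) :=
    Finset.mem_filter.mpr ⟨Finset.mem_univ _, hx₁1, hx₁x₀⟩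
  have hdvd : M ∣ lamF S x₀ - lamF S x₁ := by
    rw [hM]
    exact Finset.gcd_dvd hx₁f
  have hdiff_ne : lamF S x₀ - lamF S x₁ ≠ 0 := sub_ne_zero.mpr hne
  -- M is nonnegative and positive
  have hMnonneg : 0 ≤ M := by
    rcases le_or_gt 0 M with h | h
    · exact h
    · exfalso
      have hnorm : normalize M = M := by
        rw [hM]
        exact Finset.normalize_gcd
      rw [Int.normalize_of_nonpos h.le] at hnorm
      omega
  have hMne : M ≠ 0 := by
    intro h
    rw [h] at hdvd
    exact hdiff_ne (zero_dvd_iff.mp hdvd)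
  -- the size bound : M^2 ≤ 2 s (s+3)
  have hMle : M ≤ |lamF S x₀ - lamF S x₁| :=
    Int.le_of_dvd (abs_pos.mpr hdiff_ne) ((dvd_abs M _).mpr hdvd)
  have hlam0 : |lamF S x₀| ≤ (s : ℤ) := by
    rw [← hs]
    exact lam_abs S x₀
  have hMsq : M ^ 2 ≤ 2 * (s : ℤ) * ((s : ℤ) + 3) := by
    have h1' : M ^ 2 ≤ (lamF S x₀ - lamF S x₁) ^ 2 := by
      have := sq_abs (lamF S x₀ - lamF S x₁)
      nlinarith [hMle, hMnonneg, abs_nonneg (lamF S x₀ - lamF S x₁)]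
    have h2' : (lamF S x₀ - lamF S x₁) ^ 2
        ≤ 2 * (lamF S x₀) ^ 2 + 2 * (lamF S x₁) ^ 2 := by
      nlinarith [sq_nonneg (lamF S x₀ + lamF S x₁)]
    have h3' : (lamF S x₀) ^ 2 ≤ (s : ℤ) ^ 2 := by
      nlinarith [hlam0, abs_nonneg (lamF S x₀), sq_abs (lamF S x₀)]
    have h4' : (lamF S x₁) ^ 2 ≤ 2 * (s : ℤ) := by rw [← hs]; exact hx₁sq
    have hs0 : (0 : ℤ) ≤ (s : ℤ) := Int.natCast_nonneg s
    nlinarith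
  -- M divides a power of 2
  have hz00 : z₀ ≠ 0 := by
    intro h
    rw [h] at hz₀
    exact h0 hz₀
  have hDdvd : M ∣ (∑ x ∈ T1 m, (lamF S x₀ - lamF S x) * sg (x * z₀)) := by
    refine Finset.dvd_sum (fun x hx => ?_)
    by_cases hxx : x = x₀
    · rw [hxx, sub_self, zero_mul]
      exact dvd_zero M
    · have hxmem : x ∈ univ.filter (fun y : GaloisField 2 m => Ftr y = 1 ∧ y ≠ x₀) := by
        refine Finset.mem_filter.mpr ⟨Finset.mem_univ _, ?_, hxx⟩
        exact (Finset.mem_filter.mp hx).2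
      exact Dvd.dvd.mul_right (hM ▸ Finset.gcd_dvd hxmem) _
  have hsg0 : ∑ x ∈ T1 m, sg (x * z₀) = 0 := by
    have h' := sumT1_sg hm' z₀
    rw [if_neg hz00, if_neg hz₀1] at h'
    omega
  have hD2 : (∑ x ∈ T1 m, (lamF S x₀ - lamF S x) * sg (x * z₀)) * 2 = -(2 ^ m) := by
    have l : ∑ x ∈ T1 m, (lamF S x₀ - lamF S x) * sg (x * z₀)
        = ∑ x ∈ T1 m, (lamF S x₀ * sg (x * z₀) - lamF S x * sg (x * z₀)) :=
      Finset.sum_congr rfl (fun x _ => by ring)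
    rw [l, Finset.sum_sub_distrib, ← Finset.mul_sum, hsg0, mul_zero, zero_sub, neg_mul,
      lamT1_z hm' S hz00 hz₀1 hz₀ hz₀S]
  have hdvd2m : M ∣ (2 : ℤ) ^ m := by
    have h1' : M ∣ (∑ x ∈ T1 m, (lamF S x₀ - lamF S x) * sg (x * z₀)) * 2 :=
      Dvd.dvd.mul_right hDdvd 2
    rw [hD2] at h1'
    exact (dvd_neg).mp h1'
  -- conclude : M = 2^ℓ
  have hnatdvd : M.natAbs ∣ 2 ^ m := by
    have := Int.natAbs_dvd_natAbs.mpr hdvd2m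
    simpa [Int.natAbs_pow] using this
  obtain ⟨ℓ, hℓm, hℓ⟩ := (Nat.dvd_prime_pow Nat.prime_two).mp hnatdvd
  have hMeq : M = 2 ^ ℓ := by
    have := Int.natAbs_of_nonneg hMnonneg
    rw [← this, hℓ]
    push_cast
    ring
  refine ⟨ℓ, hMeq, ?_⟩
  -- the logarithmic bound
  have hpow : (2 : ℕ) ^ (2 * ℓ) ≤ 2 * s * (s + 3) := by
    have h1' : ((2 : ℤ)) ^ (2 * ℓ) ≤ 2 * (s : ℤ) * ((s : ℤ) + 3) := by
      calc ((2 : ℤ)) ^ (2 * ℓ) = (2 ^ ℓ) ^ 2 := by rw [← pow_mul, mul_comm]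
        _ = M ^ 2 := by rw [hMeq]
        _ ≤ 2 * (s : ℤ) * ((s : ℤ) + 3) := hMsq
    exact_mod_cast h1'
  have hn0 : 2 * s * (s + 3) ≠ 0 := by positivity
  have hlog : 2 * ℓ ≤ Nat.log 2 (2 * s * (s + 3)) :=
    (Nat.le_log_iff_pow_le one_lt_two hn0).mpr hpow
  omega


end
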